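/- Let J(t) = trace((Σ_θ⁻¹ + S₀ + Σ_{i=1}^{t} γ_i⁻¹ s_i s_iᵀ)⁻¹) with Σ_θ positive definite, S₀ positive semidefinite, γ_i > 0, and s_i ∈ ℝⁿ. Then lim_{t→∞} J(t) = 0 if and only if for every unit vector v ∈ ℝⁿ, the series Σ_{i=1}^{∞} γ_i⁻¹ (vᵀ s_i)² diverges to infinity. -/

import Mathlib

open Matrix Filter

namespace Matrix.PosSemidef

open scoped MatrixOrder in
noncomputable def sqrt {n : ℕ} {A : Matrix (Fin n) (Fin n) ℝ} (_hA : A.PosSemidef) :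
    Matrix (Fin n) (Fin n) ℝ := CFC.sqrt A

open scoped MatrixOrder in
theorem posSemidef_sqrt {n : ℕ} {A : Matrix (Fin n) (Fin n) ℝ} (hA : A.PosSemidef) :
    hA.sqrt.PosSemidef := Matrix.nonneg_iff_posSemidef.mp (CFC.sqrt_nonneg A)

open scoped MatrixOrder in
theorem sqrt_mul_self {n : ℕ} {A : Matrix (Fin n) (Fin n) ℝ} (hA : A.PosSemidef) :
    hA.sqrt * hA.sqrt = A := CFC.sqrt_mul_sqrt_self A (Matrix.nonneg_iff_posSemidef.mpr hA)

end Matrix.PosSemidef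

private lemma dot_self_nonneg {n : ℕ} (v : Fin n → ℝ) : 0 ≤ v ⬝ᵥ v :=
  Finset.sum_nonneg fun i _ => mul_self_nonneg _

private lemma cs_dot {n : ℕ} (f g : Fin n → ℝ) : (f ⬝ᵥ g)^2 ≤ (f ⬝ᵥ f) * (g ⬝ᵥ g) := by
  simpa [dotProduct, sq] using Finset.sum_mul_sq_le_sq_mul_sq Finset.univ f g

private lemma psd_dot_factor {n : ℕ} {A : Matrix (Fin n) (Fin n) ℝ} (hA : A.PosSemidef)
    (x y : Fin n → ℝ) : x ⬝ᵥ A *ᵥ y = (hA.sqrt *ᵥ x) ⬝ᵥ (hA.sqrt *ᵥ y) := by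
  have hsymm : hA.sqrt.transpose = hA.sqrt := by
    have h := hA.posSemidef_sqrt.1
    rwa [Matrix.IsHermitian, Matrix.conjTranspose_eq_transpose_of_trivial] at h
  conv_lhs => rw [← hA.sqrt_mul_self]
  rw [← Matrix.mulVec_mulVec, Matrix.dotProduct_mulVec, ← Matrix.mulVec_transpose, hsymm]

private lemma cs_psd {n : ℕ} {A : Matrix (Fin n) (Fin n) ℝ} (hA : A.PosSemidef)
    (x y : Fin n → ℝ) : (x ⬝ᵥ A *ᵥ y)^2 ≤ (x ⬝ᵥ A *ᵥ x) * (y ⬝ᵥ A *ᵥ y) := by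
  rw [psd_dot_factor hA x y, psd_dot_factor hA x x, psd_dot_factor hA y y]
  exact cs_dot _ _

private lemma dot_vecMulVec {n : ℕ} (w v : Fin n → ℝ) :
    v ⬝ᵥ (Matrix.vecMulVec w w) *ᵥ v = (v ⬝ᵥ w)^2 := by
  have : v ⬝ᵥ (Matrix.vecMulVec w w) *ᵥ v = ∑ i, ∑ k, (v i * w i) * (w k * v k) := by
    simp only [dotProduct, Matrix.mulVec, Matrix.vecMulVec_apply, Finset.mul_sum]
    exact Finset.sum_congr rfl fun i _ => Finset.sum_congr rfl fun k _ => by ring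
  rw [this, ← Finset.sum_mul_sum, sq, dotProduct]
  congr 1
  exact Finset.sum_congr rfl fun k _ => by ring

private lemma quad_le_trace {n : ℕ} {A : Matrix (Fin n) (Fin n) ℝ} (hA : A.PosSemidef)
    (v : Fin n → ℝ) (hv : v ⬝ᵥ v = 1) : v ⬝ᵥ A *ᵥ v ≤ A.trace := by
  have hsymm : hA.sqrt.transpose = hA.sqrt := by
    have h := hA.posSemidef_sqrt.1
    rwa [Matrix.IsHermitian, Matrix.conjTranspose_eq_transpose_of_trivial] at h
  set C := hA.sqrt with hC
  have htr : A.trace = ∑ i, ∑ j, (C i j)^2 := by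
    conv_lhs => rw [← hA.sqrt_mul_self]
    simp only [Matrix.trace, Matrix.diag, Matrix.mul_apply, ← hC]
    refine Finset.sum_congr rfl fun i _ => Finset.sum_congr rfl fun j _ => ?_
    have : C j i = C i j := congrFun (congrFun hsymm i) j
    rw [this, sq]
  rw [psd_dot_factor hA, htr]
  have hexp : (C *ᵥ v) ⬝ᵥ (C *ᵥ v) = ∑ i, (∑ j, C i j * v j)^2 := by
    simp [dotProduct, Matrix.mulVec, sq]
  rw [hexp]
  refine Finset.sum_le_sum fun i _ => ?_
  calc (∑ j, C i j * v j)^2 ≤ (∑ j, (C i j)^2) * (∑ j, (v j)^2) :=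
        Finset.sum_mul_sq_le_sq_mul_sq Finset.univ _ _
    _ = ∑ j, (C i j)^2 := by
        have : (∑ j, (v j)^2) = 1 := by simpa [dotProduct, sq] using hv
        rw [this, mul_one]

private lemma sum_mulVec' {n : ℕ} {ι : Type*} (F : Finset ι)
    (A : ι → Matrix (Fin n) (Fin n) ℝ) (v : Fin n → ℝ) :
    (∑ i ∈ F, A i) *ᵥ v = ∑ i ∈ F, (A i) *ᵥ v := by
  induction F using Finset.cons_induction with
  | empty => simp [Matrix.zero_mulVec]
  | cons a F ha ih => simp [Matrix.add_mulVec, ih]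

private lemma term_psd {n : ℕ} {c : ℝ} (hc : 0 ≤ c) (w : Fin n → ℝ) :
    (c • Matrix.vecMulVec w w).PosSemidef := by
  refine Matrix.PosSemidef.of_dotProduct_mulVec_nonneg ?_ ?_
  · ext i j
    simp [Matrix.conjTranspose_apply, Matrix.vecMulVec_apply, mul_comm]
  · intro x
    have hx : star x = x := by simp
    rw [hx, Matrix.smul_mulVec, dotProduct_smul, dot_vecMulVec, smul_eq_mul]
    exact mul_nonneg hc (sq_nonneg _)

private lemma trace_eq_sum_quad {n : ℕ} (B : Matrix (Fin n) (Fin n) ℝ) :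
    B.trace = ∑ j, (Pi.single j 1 : Fin n → ℝ) ⬝ᵥ B *ᵥ (Pi.single j 1) := by
  refine Finset.sum_congr rfl fun j _ => ?_
  simp [Matrix.mulVec_single, single_dotProduct]

private lemma inv_quad_bound {n : ℕ} {B : Matrix (Fin n) (Fin n) ℝ} (hB : B.PosDef)
    {c : ℝ} (hc : 0 < c) (h : ∀ u : Fin n → ℝ, c * (u ⬝ᵥ u) ≤ u ⬝ᵥ B *ᵥ u) (v : Fin n → ℝ) :
    v ⬝ᵥ B⁻¹ *ᵥ v ≤ (v ⬝ᵥ v) / c := by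
  set w := B⁻¹ *ᵥ v with hw
  have hBw : B *ᵥ w = v := by
    rw [hw, Matrix.mulVec_mulVec, Matrix.mul_nonsing_inv _ (isUnit_iff_ne_zero.mpr hB.det_pos.ne'),
      Matrix.one_mulVec]
  have ha : 0 ≤ v ⬝ᵥ w := by
    have := hB.inv.posSemidef.dotProduct_mulVec_nonneg v
    simpa using this
  have h1 : c * (w ⬝ᵥ w) ≤ v ⬝ᵥ w := by
    have h' := h w
    rw [hBw] at h'
    rwa [dotProduct_comm w v] at h'
  have h2 : (v ⬝ᵥ w)^2 ≤ (v ⬝ᵥ v) * (w ⬝ᵥ w) := cs_dot v w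
  have hvv : 0 ≤ v ⬝ᵥ v := dot_self_nonneg v
  rw [le_div_iff₀ hc]
  rcases eq_or_lt_of_le (dot_self_nonneg w) with hww | hww
  · have ha0 : v ⬝ᵥ w = 0 := by nlinarith [h2, ha]
    rw [ha0]; simpa using hvv
  · nlinarith [h1, h2, ha, mul_pos hc hww]

private lemma dotProduct_sum' {n : ℕ} {ι : Type*} (F : Finset ι) (v : Fin n → ℝ)
    (w : ι → Fin n → ℝ) :
    v ⬝ᵥ (∑ i ∈ F, w i) = ∑ i ∈ F, v ⬝ᵥ w i := by
  induction F using Finset.cons_induction with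
  | empty => simp
  | cons a F ha ih => simp [dotProduct_add, ih]

theorem stmt_17 (n : ℕ)
    (S : Matrix (Fin n) (Fin n) ℝ) (hS : S.PosDef)
    (S₀ : Matrix (Fin n) (Fin n) ℝ) (hS₀ : S₀.PosSemidef)
    (γ : ℕ → ℝ) (hγ : ∀ i, 0 < γ i)
    (s : ℕ → Fin n → ℝ)
    (J : ℕ → ℝ)
    (hJ : ∀ t, J t =
      ((S⁻¹ + S₀ + ∑ i ∈ Finset.Icc 1 t,
        (γ i)⁻¹ • Matrix.vecMulVec (s i) (s i))⁻¹).trace) :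
    Tendsto J atTop (nhds 0) ↔
      ∀ v : Fin n → ℝ, ∑ j, (v j) ^ 2 = 1 →
        Tendsto (fun t => ∑ i ∈ Finset.Icc 1 t, (γ i)⁻¹ * (v ⬝ᵥ s i) ^ 2)
          atTop atTop := by
  -- setup
  set A : ℕ → Matrix (Fin n) (Fin n) ℝ :=
    fun t => S⁻¹ + S₀ + ∑ i ∈ Finset.Icc 1 t, (γ i)⁻¹ • Matrix.vecMulVec (s i) (s i) with hA
  have hJ' : ∀ t, J t = ((A t)⁻¹).trace := hJ
  have hsumPSD : ∀ t, (∑ i ∈ Finset.Icc 1 t, (γ i)⁻¹ • Matrix.vecMulVec (s i) (s i)).PosSemidef :=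
    fun t => Finset.sum_induction _ _ (fun _ _ hA hB => hA.add hB) Matrix.PosSemidef.zero
      (fun i _ => term_psd (inv_nonneg.mpr (hγ i).le) (s i))
  have hS' : (S⁻¹ + S₀).PosDef := hS.inv.add_posSemidef hS₀
  have hApos : ∀ t, (A t).PosDef := fun t => hS'.add_posSemidef (hsumPSD t)
  -- quadratic form formula
  have hqform : ∀ t (v : Fin n → ℝ), v ⬝ᵥ (A t) *ᵥ v =
      v ⬝ᵥ (S⁻¹ + S₀) *ᵥ v + ∑ i ∈ Finset.Icc 1 t, (γ i)⁻¹ * (v ⬝ᵥ s i) ^ 2 := by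
    intro t v
    rw [hA]
    simp only
    rw [Matrix.add_mulVec, dotProduct_add, sum_mulVec', dotProduct_sum']
    congr 1
    refine Finset.sum_congr rfl fun i _ => ?_
    rw [Matrix.smul_mulVec, dotProduct_smul, dot_vecMulVec, smul_eq_mul]
  have hqnn : ∀ (v : Fin n → ℝ), 0 ≤ v ⬝ᵥ (S⁻¹ + S₀) *ᵥ v := by
    intro v
    have := hS'.posSemidef.dotProduct_mulVec_nonneg v
    simpa using this
  constructor
  · -- forward
    intro hconv v hv
    have hv' : v ⬝ᵥ v = 1 := by simpa [dotProduct, sq] using hv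
    have hvne : v ≠ 0 := by
      intro h
      rw [h] at hv'
      simp [dotProduct] at hv'
    set f : ℕ → ℝ := fun t => v ⬝ᵥ (A t)⁻¹ *ᵥ v with hf
    have hfpos : ∀ t, 0 < f t := by
      intro t
      have := (hApos t).inv.dotProduct_mulVec_pos hvne
      simpa using this
    have hfle : ∀ t, f t ≤ J t := by
      intro t
      rw [hJ' t]
      exact quad_le_trace (hApos t).inv.posSemidef v hv'
    have hf0 : Tendsto f atTop (nhds 0) :=
      tendsto_of_tendsto_of_tendsto_of_le_of_le tendsto_const_nhds hconv
        (fun t => (hfpos t).le) hfle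
    have hfinv : Tendsto (fun t => (f t)⁻¹) atTop atTop := by
      apply Filter.Tendsto.inv_tendsto_nhdsGT_zero
      exact tendsto_nhdsWithin_of_tendsto_nhds_of_eventually_within _ hf0
        (Filter.Eventually.of_forall fun t => hfpos t)
    have hqge : ∀ t, (f t)⁻¹ ≤ v ⬝ᵥ (A t) *ᵥ v := by
      intro t
      have hinvU : IsUnit (A t).det := isUnit_iff_ne_zero.mpr (hApos t).det_pos.ne'
      have hAw : (A t) *ᵥ ((A t)⁻¹ *ᵥ v) = v := by
        rw [Matrix.mulVec_mulVec, Matrix.mul_nonsing_inv _ hinvU, Matrix.one_mulVec]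
      have hcs := cs_psd (hApos t).posSemidef v ((A t)⁻¹ *ᵥ v)
      rw [hAw, hv'] at hcs
      have h2 : ((A t)⁻¹ *ᵥ v) ⬝ᵥ v = f t := dotProduct_comm _ _
      rw [h2] at hcs
      have := hfpos t
      nlinarith [inv_nonneg.mpr this.le, mul_inv_cancel₀ this.ne']
    have hqtend : Tendsto (fun t => v ⬝ᵥ (A t) *ᵥ v) atTop atTop :=
      tendsto_atTop_mono hqge hfinv
    have := tendsto_atTop_add_const_right atTop (-(v ⬝ᵥ (S⁻¹ + S₀) *ᵥ v)) hqtend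
    refine this.congr fun t => ?_
    rw [hqform t v]
    ring
  · -- backward
    intro H
    rw [Metric.tendsto_atTop]
    intro ε hε
    set c : ℝ := ((n : ℝ) + 1) / ε with hc
    have hcpos : 0 < c := div_pos (by positivity) hε
    -- compact sphere
    set K : Set (Fin n → ℝ) := {v | ∑ j, (v j) ^ 2 = 1} with hK
    have hKc : IsCompact K := by
      have hcont : Continuous fun v : Fin n → ℝ => ∑ j, (v j) ^ 2 :=
        continuous_finset_sum _ fun j _ => (continuous_apply j).pow 2
      have hclosed : IsClosed K := by
        have : K = (fun v : Fin n → ℝ => ∑ j, (v j) ^ 2) ⁻¹' {1} := rfl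
        rw [this]
        exact IsClosed.preimage hcont isClosed_singleton
      have hbdd : K ⊆ Metric.closedBall 0 1 := by
        intro v hv
        rw [Metric.mem_closedBall, dist_zero_right]
        rw [pi_norm_le_iff_of_nonneg zero_le_one]
        intro i
        rw [Real.norm_eq_abs, ← sq_le_one_iff_abs_le_one]
        calc (v i)^2 ≤ ∑ j, (v j)^2 :=
              Finset.single_le_sum (fun j _ => sq_nonneg (v j)) (Finset.mem_univ i)
          _ = 1 := hv
      exact Metric.isCompact_of_isClosed_isBounded hclosed
        (Metric.isBounded_closedBall.subset hbdd)
    -- open cover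
    set U : ℕ → Set (Fin n → ℝ) := fun t => {v | c < v ⬝ᵥ (A t) *ᵥ v} with hU
    have hUopen : ∀ t, IsOpen (U t) := by
      intro t
      have : Continuous fun v : Fin n → ℝ => v ⬝ᵥ (A t) *ᵥ v :=
        continuous_id.dotProduct (continuous_const.matrix_mulVec continuous_id)
      exact isOpen_lt continuous_const this
    have hcover : K ⊆ ⋃ t, U t := by
      intro v hv
      have hdiv := H v hv
      rw [tendsto_atTop] at hdiv
      obtain ⟨t, ht⟩ := (hdiv (c + 1)).exists
      refine Set.mem_iUnion.mpr ⟨t, ?_⟩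
      show c < v ⬝ᵥ (A t) *ᵥ v
      rw [hqform t v]
      have := hqnn v
      linarith
    obtain ⟨T, hT⟩ := hKc.elim_finite_subcover U hUopen hcover
    set T0 : ℕ := T.sup id with hT0
    -- monotonicity
    have hmono : ∀ (v : Fin n → ℝ) (a b : ℕ), a ≤ b →
        v ⬝ᵥ (A a) *ᵥ v ≤ v ⬝ᵥ (A b) *ᵥ v := by
      intro v a b hab
      rw [hqform a v, hqform b v]
      have : ∑ i ∈ Finset.Icc 1 a, (γ i)⁻¹ * (v ⬝ᵥ s i) ^ 2 ≤
          ∑ i ∈ Finset.Icc 1 b, (γ i)⁻¹ * (v ⬝ᵥ s i) ^ 2 :=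
        Finset.sum_le_sum_of_subset_of_nonneg
          (Finset.Icc_subset_Icc_right hab)
          (fun i _ _ => mul_nonneg (inv_nonneg.mpr (hγ i).le) (sq_nonneg _))
      linarith
    -- uniform lower bound for t ≥ T0
    have hkey : ∀ t, T0 ≤ t → ∀ v ∈ K, c < v ⬝ᵥ (A t) *ᵥ v := by
      intro t ht v hv
      obtain ⟨t', ht'T, ht'⟩ := Set.mem_iUnion₂.mp (hT hv)
      have h1 : c < v ⬝ᵥ (A t') *ᵥ v := ht'
      exact lt_of_lt_of_le h1 (hmono v t' t ((Finset.le_sup (f := id) ht'T).trans ht))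
    -- scaling to all vectors
    have hlow : ∀ t, T0 ≤ t → ∀ v : Fin n → ℝ, c * (v ⬝ᵥ v) ≤ v ⬝ᵥ (A t) *ᵥ v := by
      intro t ht v
      by_cases hv0 : v = 0
      · subst hv0
        simp [dotProduct]
      · have hvv : 0 < v ⬝ᵥ v := by
        -- positive since v ≠ 0
          obtain ⟨j, hj⟩ := Function.ne_iff.mp hv0
          exact Finset.sum_pos' (fun i _ => mul_self_nonneg _)
            ⟨j, Finset.mem_univ j, mul_self_pos.mpr (by simpa using hj)⟩
        set r : ℝ := Real.sqrt (v ⬝ᵥ v) with hr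
        have hrpos : 0 < r := Real.sqrt_pos.mpr hvv
        have hrsq : r ^ 2 = v ⬝ᵥ v := Real.sq_sqrt hvv.le
        have huK : (r⁻¹ • v) ∈ K := by
          show (∑ j, ((r⁻¹ • v) j) ^ 2) = 1
          have : ∀ j, ((r⁻¹ • v) j) ^ 2 = r⁻¹ ^ 2 * (v j) ^ 2 := by
            intro j; simp [Pi.smul_apply, mul_pow]
          simp_rw [this]
          rw [← Finset.mul_sum]
          have hsum : (∑ j, (v j) ^ 2) = v ⬝ᵥ v := by
            simp [dotProduct, sq]
          rw [hsum, ← hrsq]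
          field_simp
        have := hkey t ht _ huK
        have hquad : (r⁻¹ • v) ⬝ᵥ (A t) *ᵥ (r⁻¹ • v) = r⁻¹ ^ 2 * (v ⬝ᵥ (A t) *ᵥ v) := by
          rw [Matrix.mulVec_smul, smul_dotProduct, dotProduct_smul]
          simp [smul_eq_mul, sq]
          ring
        rw [hquad] at this
        have hr2 : (0:ℝ) < r ^ 2 := by positivity
        have h3 : c * r ^ 2 < (r⁻¹ ^ 2 * (v ⬝ᵥ (A t) *ᵥ v)) * r ^ 2 :=
          mul_lt_mul_of_pos_right this hr2
        have h4 : (r⁻¹ ^ 2 * (v ⬝ᵥ (A t) *ᵥ v)) * r ^ 2 = v ⬝ᵥ (A t) *ᵥ v := by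
          field_simp
        rw [h4, hrsq] at h3
        exact h3.le
    -- conclude
    refine ⟨T0, fun t ht => ?_⟩
    have hBpsd : ((A t)⁻¹).PosSemidef := (hApos t).inv.posSemidef
    have hJnn : 0 ≤ J t := by
      rw [hJ' t, trace_eq_sum_quad]
      refine Finset.sum_nonneg fun j _ => ?_
      have := hBpsd.dotProduct_mulVec_nonneg (Pi.single j 1)
      simpa using this
    have hJle : J t ≤ (n : ℝ) / c := by
      rw [hJ' t, trace_eq_sum_quad]
      have hbound : ∀ j : Fin n, (Pi.single j 1 : Fin n → ℝ) ⬝ᵥ (A t)⁻¹ *ᵥ (Pi.single j 1) ≤ 1 / c := by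
        intro j
        have := inv_quad_bound (hApos t) hcpos (hlow t ht) (Pi.single j 1)
        have hone : (Pi.single j 1 : Fin n → ℝ) ⬝ᵥ (Pi.single j 1 : Fin n → ℝ) = 1 := by
          rw [single_dotProduct]
          simp
        rwa [hone] at this
      calc (∑ j, (Pi.single j 1 : Fin n → ℝ) ⬝ᵥ (A t)⁻¹ *ᵥ (Pi.single j 1)) ≤
            ∑ _j : Fin n, 1 / c := Finset.sum_le_sum fun j _ => hbound j
        _ = (n : ℝ) / c := by simp [Finset.sum_const]; ring
    rw [Real.dist_eq, sub_zero, abs_of_nonneg hJnn]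
    calc J t ≤ (n : ℝ) / c := hJle
      _ < ε := by
        rw [hc]
        rw [div_div_eq_mul_div]
        rw [div_lt_iff₀ (by positivity)]
        have : (n:ℝ) < (n:ℝ) + 1 := by linarith
        calc (n:ℝ) * ε < ((n:ℝ)+1) * ε := by nlinarith
          _ = ε * ((n:ℝ)+1) := by ring
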